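/- Let $k$ be a local field (a finite extension of $\mathbb{Q}_p$ or $\mathbb{R}$), $q(x_1,\dots,x_n)$ a non-degenerate quadratic form over $k$, $p(t) \in k[t]$ nonzero, and let $\alpha \in k$ be a root of $p$ of odd order $r$. Then the singular point $(0,\dots,0,\alpha)$ of the hypersurface $q(x_1,\dots,x_n)=p(t)$ is a limit of smooth $k$-points of the hypersurface. -/

import Mathlib

open Filter Polynomial Topology

/-- `k` a local field (a complete, locally compact nontrivially
normed field of characteristic zero), `q` a non-degenerate quadratic form over
`k` (Gram matrix `M`, `q x = xᵀ M x`, gradient `2 M x`), `p ∈ k[t]` nonzero, and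
`α ∈ k` a root of `p` of odd order `r`.  Then the singular point `(0,…,0,α)` of
the hypersurface `q(x) = p(t)` is a limit of smooth `k`-points, i.e. it lies in
the closure of the smooth locus of `X(k)`. -/
theorem stmt13 (k : Type*) [NontriviallyNormedField k] [CompleteSpace k]
    [LocallyCompactSpace k] [CharZero k]
    (n : ℕ) (hn : 1 ≤ n)
    (M : Matrix (Fin n) (Fin n) k) (hsymm : M.IsSymm) (hdet : M.det ≠ 0)
    (p : Polynomial k) (hp : p ≠ 0)
    (α : k) (r : ℕ) (hr : p.rootMultiplicity α = r) (hodd : Odd r)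
    (hroot : p.eval α = 0) :
    ((0, α) : (Fin n → k) × k) ∈
      closure {P : (Fin n → k) × k |
        dotProduct P.1 (M.mulVec P.1) = p.eval P.2 ∧
        ¬ (M.mulVec P.1 = 0 ∧ p.derivative.eval P.2 = 0)} := by
  classical
  have hFin : Nonempty (Fin n) := ⟨⟨0, hn⟩⟩
  -- find a vector on which the quadratic form is nonzero
  obtain ⟨x0, hc⟩ : ∃ x0 : Fin n → k, dotProduct x0 (M.mulVec x0) ≠ 0 := by
    by_contra h
    push_neg at h
    apply hdet
    have hM : M = 0 := by
      ext i j
      have key := h (Pi.single i 1 + Pi.single j 1)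
      have hij : dotProduct (Pi.single i (1:k)) (M.mulVec (Pi.single j 1)) = M i j := by
        simp [Matrix.mulVec_single, single_dotProduct]
      have hji : dotProduct (Pi.single j (1:k)) (M.mulVec (Pi.single i 1)) = M j i := by
        simp [Matrix.mulVec_single, single_dotProduct]
      have hii := h (Pi.single i 1)
      have hjj := h (Pi.single j 1)
      rw [Matrix.mulVec_add, add_dotProduct, dotProduct_add,
        dotProduct_add, hii, hij, hji, hjj] at key
      have hsym : M j i = M i j := hsymm.apply i j
      have : (2 : k) * M i j = 0 := by rw [two_mul]; linear_combination key - hsym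
      have h2 : (2 : k) ≠ 0 := two_ne_zero
      simpa [h2] using this
    rw [hM, Matrix.det_zero]
  set c : k := dotProduct x0 (M.mulVec x0) with hc_def
  have hMx0 : M.mulVec x0 ≠ 0 := by
    intro h; apply hc; simp only [hc_def, h, dotProduct_zero]
  -- polynomial factorization
  set p0 : Polynomial k := p /ₘ (Polynomial.X - Polynomial.C α) ^ r with hp0
  have hfac : ∀ t : k, p.eval t = (t - α) ^ r * p0.eval t := by
    intro t
    conv_lhs => rw [← Polynomial.pow_mul_divByMonic_rootMultiplicity_eq p α]
    rw [hr]
    simp [hp0]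
  set b : k := p0.eval α with hb_def
  have hb : b ≠ 0 := by
    have := Polynomial.eval_divByMonic_pow_rootMultiplicity_ne_zero α hp
    rw [hr] at this
    exact this
  obtain ⟨m, hm⟩ := hodd
  subst hm
  -- local square root around b² via the inverse function theorem
  have hsq : HasStrictDerivAt (fun z : k => z * z) (b + b) b := by
    simpa using (hasStrictDerivAt_id b).fun_mul (hasStrictDerivAt_id b)
  have hb2 : b + b ≠ 0 := by
    rw [← two_mul]; exact mul_ne_zero two_ne_zero hb
  set w : k → k := hsq.localInverse _ _ _ hb2 with hw_def
  have hright : ∀ᶠ z in 𝓝 (b * b), (w z) * (w z) = z := by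
    have := (hsq.hasStrictFDerivAt_equiv hb2).eventually_right_inverse
    simpa using this
  have hwb : w (b * b) = b :=
    (hsq.hasStrictFDerivAt_equiv hb2).localInverse_apply_image
  have hcont : ContinuousAt w (b * b) := by
    have := (hsq.hasStrictFDerivAt_equiv hb2).localInverse_continuousAt
    simpa using this
  -- the curve of smooth points
  set t : k → k := fun u => α + (c * b) * u ^ 2 with ht_def
  set y : k → k := fun u => b * p0.eval (t u) with hy_def
  have hy : Tendsto y (𝓝 0) (𝓝 (b * b)) := by
    have hcy : Continuous y := by
      apply continuous_const.mul
      exact p0.continuous.comp (by continuity)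
    have h0 : y 0 = b * b := by simp [hy_def, ht_def, ← hb_def]
    simpa [h0] using hcy.tendsto 0
  have hwy : Tendsto (fun u => w (y u)) (𝓝 0) (𝓝 b) := by
    have := hcont.tendsto.comp hy
    rwa [hwb] at this
  set s : k → k := fun u => c ^ m * b ^ m * u ^ (2*m+1) * w (y u) with hs_def
  have hts : Tendsto t (𝓝 0) (𝓝 α) := by
    have hct : Continuous t := by continuity
    have : t 0 = α := by simp [ht_def]
    simpa [this] using hct.tendsto 0
  have hss : Tendsto s (𝓝 0) (𝓝 0) := by
    have hur : Tendsto (fun u : k => c ^ m * b ^ m * u ^ (2*m+1)) (𝓝 0) (𝓝 0) := by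
      have : Tendsto (fun u : k => u ^ (2*m+1)) (𝓝 0) (𝓝 0) := by
        have := (continuous_pow (2*m+1) (M := k)).tendsto 0
        simpa [zero_pow (by omega : 2*m+1 ≠ 0)] using this
      simpa using this.const_mul (c ^ m * b ^ m)
    simpa using hur.mul hwy
  apply mem_closure_of_tendsto (f := fun u : k => ((s u • x0, t u) : (Fin n → k) × k))
    (b := 𝓝[≠] (0 : k))
  · apply Tendsto.prodMk_nhds
    · have : Tendsto (fun u => s u • x0) (𝓝 0) (𝓝 ((0:k) • x0)) := hss.smul_const x0
      simpa using this.mono_left nhdsWithin_le_nhds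
    · exact hts.mono_left nhdsWithin_le_nhds
  · have h1 : ∀ᶠ u in 𝓝[≠] (0:k), (w (y u)) * (w (y u)) = y u :=
      (hy.eventually hright).filter_mono nhdsWithin_le_nhds
    have h2 : ∀ᶠ u in 𝓝[≠] (0:k), w (y u) ≠ 0 :=
      (hwy.eventually_ne hb).filter_mono nhdsWithin_le_nhds
    have h3 : ∀ᶠ u in 𝓝[≠] (0:k), u ≠ 0 := eventually_mem_nhdsWithin
    filter_upwards [h1, h2, h3] with u hw2 hwne hune
    have hsne : s u ≠ 0 := by
      simp only [hs_def]
      exact mul_ne_zero (mul_ne_zero (mul_ne_zero (pow_ne_zero m hc) (pow_ne_zero m hb))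
        (pow_ne_zero (2*m+1) hune)) hwne
    constructor
    · have hlhs : dotProduct (s u • x0) (M.mulVec (s u • x0)) = s u * (s u * c) := by
        rw [Matrix.mulVec_smul, smul_dotProduct, dotProduct_smul]
        simp [smul_eq_mul, hc_def, mul_assoc]
      rw [hlhs, hfac (t u)]
      have htu : t u - α = (c * b) * u ^ 2 := by simp [ht_def]
      rw [htu]
      have hyu : y u = b * p0.eval (t u) := rfl
      rw [hyu] at hw2
      simp only [hs_def]
      linear_combination (c ^ (2 * m + 1) * b ^ (2 * m) * u ^ (2 * (2 * m + 1))) * hw2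
    · rintro ⟨h1', -⟩
      rw [Matrix.mulVec_smul] at h1'
      exact hMx0 (by simpa [hsne] using h1')
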